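/- Let p be a prime, l ≥ 1, d ≥ 1, m ≥ 1 integers, c ∈ ℚ_p nonzero, and θ ∈ ℤ_p not equal to the image of any natural number. Then the following three conditions are equivalent: (1) l divides m, and for every integer a coprime to p one has a^m ≡ 1 (mod p^{ld − (ν_p(c) mod l)}); (2) the sequence (ℓ_{p^l,d}(c·(n−θ)^m))_{n≥0} is eventually periodic; (3) ℓ_{p^l,d}(c·(n−θ)^m) = ℓ_{p^l,d}(c) for every n ∈ ℕ. -/

import Mathlib

/-- The `k`-kernel of a sequence: the set of subsequences `n ↦ a (k^i·n + j)`
for `i ≥ 0` and `0 ≤ j ≤ k^i - 1`. -/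
def kKernel {R : Type*} (k : ℕ) (a : ℕ → R) : Set (ℕ → R) :=
  {c | ∃ i j : ℕ, j < k ^ i ∧ c = fun n => a (k ^ i * n + j)}

/-- A sequence is `k`-automatic if its `k`-kernel is a finite set. -/
def IsKAutomatic {R : Type*} (k : ℕ) (a : ℕ → R) : Prop :=
  (kKernel k a).Finite

/-- A sequence with values in a `ℤ`-module is `k`-regular if the `ℤ`-submodule
of the module of all sequences generated by its `k`-kernel is finitely generated. -/
def IsKRegular {R : Type*} [AddCommGroup R] (k : ℕ) (a : ℕ → R) : Prop :=
  (Submodule.span ℤ (kKernel k a)).FG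

/-- `k` and `m` are multiplicatively independent if `k^a = m^b` forces `a = b = 0`. -/
def MultiplicativelyIndependent (k m : ℕ) : Prop :=
  ∀ a b : ℕ, k ^ a = m ^ b → a = 0 ∧ b = 0

/-- Strictly `k`-regular: `k`-regular but not `m`-regular for every `m ≥ 2`
multiplicatively independent of `k`. -/
def StrictlyKRegular {R : Type*} [AddCommGroup R] (k : ℕ) (a : ℕ → R) : Prop :=
  IsKRegular k a ∧ ∀ m : ℕ, 2 ≤ m → MultiplicativelyIndependent k m → ¬ IsKRegular m a

/-- Strictly `k`-automatic: `k`-automatic but not `m`-automatic for every `m ≥ 2`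
multiplicatively independent of `k`. -/
def StrictlyKAutomatic {R : Type*} (k : ℕ) (a : ℕ → R) : Prop :=
  IsKAutomatic k a ∧ ∀ m : ℕ, 2 ≤ m → MultiplicativelyIndependent k m → ¬ IsKAutomatic m a

/-- `f : ℤ_p → ℚ_p` is analytic if it is given by a power series converging
(to `f x`) at every point `x ∈ ℤ_p`. -/
def IsPadicAnalytic {p : ℕ} [Fact p.Prime] (f : ℤ_[p] → ℚ_[p]) : Prop :=
  ∃ c : ℕ → ℚ_[p], ∀ x : ℤ_[p], HasSum (fun i => c i * (x : ℚ_[p]) ^ i) (f x)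

/-- The set of roots of `f` in `ℤ_p`. -/
def padicRootSet {p : ℕ} [Fact p.Prime] (f : ℤ_[p] → ℚ_[p]) : Set ℤ_[p] :=
  {θ | f θ = 0}

/-- A `p`-adic integer is rational if it is the image of a rational number. -/
def IsRationalPadicInt {p : ℕ} [Fact p.Prime] (θ : ℤ_[p]) : Prop :=
  ∃ q : ℚ, (θ : ℚ_[p]) = (q : ℚ_[p])

/-- `θ` is a root of `f` of multiplicity `m`:
`f x = (x - θ)^m · g x` with `g` analytic and `g θ ≠ 0`. -/
def HasRootMultiplicity {p : ℕ} [Fact p.Prime] (f : ℤ_[p] → ℚ_[p]) (θ : ℤ_[p]) (m : ℕ) : Prop :=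
  ∃ g : ℤ_[p] → ℚ_[p], IsPadicAnalytic g ∧ g θ ≠ 0 ∧
    ∀ x : ℤ_[p], f x = ((x : ℚ_[p]) - (θ : ℚ_[p])) ^ m * g x

/-- `ν_{p^l}(x) = ⌊ν_p(x)/l⌋` (with junk value `0` at `x = 0`). -/
noncomputable def nuPow (p : ℕ) [Fact p.Prime] (l : ℕ) (x : ℚ_[p]) : ℤ :=
  x.valuation / (l : ℤ)

open Classical in
/-- `ℒ_{p^l}(x) = p^{-l·ν_{p^l}(x)}·x ∈ ℤ_p`, with `ℒ_{p^l}(0) = 0`. -/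
noncomputable def padicL (p : ℕ) [hp : Fact p.Prime] (l : ℕ) (x : ℚ_[p]) : ℤ_[p] :=
  if h : x = 0 ∨ l = 0 then 0
  else ⟨(p : ℚ_[p]) ^ (-((l : ℤ) * nuPow p l x)) * x, by
    push_neg at h
    obtain ⟨hx, hl⟩ := h
    have hp0 : (p : ℚ_[p]) ≠ 0 := Nat.cast_ne_zero.mpr hp.out.ne_zero
    have hz : (p : ℚ_[p]) ^ (-((l : ℤ) * nuPow p l x)) ≠ 0 := zpow_ne_zero _ hp0
    rw [Padic.norm_le_one_iff_val_nonneg, Padic.valuation_mul hz hx]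
    have hvz : ((p : ℚ_[p]) ^ (-((l : ℤ) * nuPow p l x))).valuation
        = -((l : ℤ) * nuPow p l x) := by
      rw [Padic.valuation_zpow, Padic.valuation_p, mul_one]
    rw [hvz, nuPow]
    have hl' : (0 : ℤ) < (l : ℤ) := by exact_mod_cast Nat.pos_of_ne_zero hl
    have := Int.emod_nonneg x.valuation (by exact_mod_cast hl : (l : ℤ) ≠ 0)
    have heq := Int.emod_add_mul_ediv x.valuation (l : ℤ)
    omega⟩

/-- `ℓ_{p^l,d}(x) = ℒ_{p^l}(x) mod p^{ld} ∈ ℤ/p^{ld}ℤ`. -/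
noncomputable def padicEll (p : ℕ) [Fact p.Prime] (l d : ℕ) (x : ℚ_[p]) : ZMod (p ^ (l * d)) :=
  PadicInt.toZModPow (l * d) (padicL p l x)

/-- A sequence is eventually periodic. -/
def EventuallyPeriodic {R : Type*} (a : ℕ → R) : Prop :=
  ∃ T : ℕ, 1 ≤ T ∧ ∃ N : ℕ, ∀ n : ℕ, N ≤ n → a (n + T) = a n


section Aux

variable {p : ℕ} [hp : Fact p.Prime]

lemma aux_p_ne_zero : (p : ℚ_[p]) ≠ 0 := Nat.cast_ne_zero.mpr hp.out.ne_zero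

lemma aux_pZ_ne_zero : (p : ℤ_[p]) ≠ 0 := Nat.cast_ne_zero.mpr hp.out.ne_zero

lemma aux_val_pow {x : ℚ_[p]} (hx : x ≠ 0) (m : ℕ) :
    (x ^ m).valuation = m * x.valuation := by
  induction m with
  | zero => simp
  | succ n ih =>
    rw [pow_succ, Padic.valuation_mul (pow_ne_zero _ hx) hx, ih]
    push_cast; ring

lemma aux_val_p_zpow (e : ℤ) : ((p : ℚ_[p]) ^ e).valuation = e := by
  have hz : (p : ℚ_[p]) ^ e ≠ 0 := zpow_ne_zero _ aux_p_ne_zero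
  have h1 : ‖(p : ℚ_[p]) ^ e‖ = (p : ℝ) ^ (-e) := Padic.norm_p_zpow _
  rw [Padic.norm_eq_zpow_neg_valuation hz] at h1
  have h1p : 1 < (p : ℝ) := by exact_mod_cast hp.out.one_lt
  have := (zpow_right_strictMono₀ h1p).injective h1
  omega

lemma aux_val_unit {w : ℤ_[p]} (hw : ‖w‖ = 1) : ((w : ℚ_[p])).valuation = 0 := by
  have hw' : ‖(w : ℚ_[p])‖ = 1 := by rw [← PadicInt.norm_def]; exact hw
  have hw0 : (w : ℚ_[p]) ≠ 0 := by
    intro h; rw [h] at hw'; simp at hw'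
  have h1 := Padic.norm_eq_zpow_neg_valuation hw0
  rw [hw'] at h1
  have h1p : 1 < (p : ℝ) := by exact_mod_cast hp.out.one_lt
  have := (zpow_right_strictMono₀ h1p).injective (by rw [← h1]; simp : (p:ℝ) ^ (0:ℤ) = (p:ℝ) ^ (-(w:ℚ_[p]).valuation))
  omega

lemma aux_unit_coe_ne_zero {w : ℤ_[p]} (hw : ‖w‖ = 1) : (w : ℚ_[p]) ≠ 0 := by
  intro h
  have hw' : ‖(w : ℚ_[p])‖ = 1 := by rw [← PadicInt.norm_def]; exact hw
  rw [h] at hw'; simp at hw'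

lemma padicL_coe {l : ℕ} (hl : l ≠ 0) {x : ℚ_[p]} (hx : x ≠ 0) :
    (padicL p l x : ℚ_[p]) = (p : ℚ_[p]) ^ (-((l : ℤ) * (x.valuation / (l : ℤ)))) * x := by
  have h : ¬(x = 0 ∨ l = 0) := by tauto
  simp [padicL, h]
  left; rfl

lemma padicL_ne_zero {l : ℕ} (hl : l ≠ 0) {x : ℚ_[p]} (hx : x ≠ 0) : padicL p l x ≠ 0 := by
  intro h
  have h2 : (padicL p l x : ℚ_[p]) = 0 := by rw [h]; rfl
  rw [padicL_coe hl hx] at h2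
  exact (mul_ne_zero (zpow_ne_zero _ aux_p_ne_zero) hx) h2

lemma padicL_val {l : ℕ} (hl : l ≠ 0) {x : ℚ_[p]} (hx : x ≠ 0) :
    (padicL p l x).valuation = x.valuation % (l : ℤ) := by
  rw [← PadicInt.valuation_coe, padicL_coe hl hx,
    Padic.valuation_mul (zpow_ne_zero _ aux_p_ne_zero) hx, aux_val_p_zpow, Int.emod_def]
  ring

end Aux

section Aux2

variable {p : ℕ} [hp : Fact p.Prime]

lemma aux_toZModPow_eq_iff (n : ℕ) (a b : ℤ_[p]) :
    PadicInt.toZModPow n a = PadicInt.toZModPow n b ↔ (p : ℤ_[p]) ^ n ∣ a - b := by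
  rw [← sub_eq_zero, ← map_sub, ← RingHom.mem_ker, PadicInt.ker_toZModPow,
    Ideal.mem_span_singleton]

lemma aux_cancel {N r : ℕ} (hrN : r ≤ N) (z z₀ : ℤ_[p]) (hz₀ : IsUnit z₀)
    (hz : z = (p : ℤ_[p]) ^ r * z₀) (u u' : ℤ_[p]) :
    PadicInt.toZModPow N (z * u) = PadicInt.toZModPow N (z * u') ↔
      PadicInt.toZModPow (N - r) u = PadicInt.toZModPow (N - r) u' := by
  rw [aux_toZModPow_eq_iff, aux_toZModPow_eq_iff, hz]
  have hN : (p : ℤ_[p]) ^ N = (p : ℤ_[p]) ^ r * (p : ℤ_[p]) ^ (N - r) := by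
    rw [← pow_add]; congr 1; omega
  have h1 : (p : ℤ_[p]) ^ r * z₀ * u - (p : ℤ_[p]) ^ r * z₀ * u'
      = (p : ℤ_[p]) ^ r * (z₀ * (u - u')) := by ring
  rw [hN, h1, mul_dvd_mul_iff_left (pow_ne_zero r aux_pZ_ne_zero), hz₀.dvd_mul_left]

lemma aux_norm_eq_of_toZModPow_eq {N : ℕ} {a b : ℤ_[p]}
    (h : PadicInt.toZModPow N a = PadicInt.toZModPow N b)
    (ha : (p : ℝ) ^ (-(N : ℤ)) < ‖a‖) : ‖a‖ = ‖b‖ := by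
  by_contra hne
  have hd : ‖a - b‖ = max ‖a‖ ‖b‖ := by
    rw [sub_eq_add_neg, PadicInt.norm_add_eq_max_of_ne (by rwa [norm_neg]), norm_neg]
  have hdvd := (aux_toZModPow_eq_iff N a b).mp h
  have hle : ‖a - b‖ ≤ (p : ℝ) ^ (-(N : ℤ)) := by
    rw [PadicInt.norm_le_pow_iff_mem_span_pow, Ideal.mem_span_singleton]
    exact hdvd
  have : ‖a‖ ≤ ‖a - b‖ := by rw [hd]; exact le_max_left _ _
  linarith

lemma aux_exists_decomp (x : ℤ_[p]) (hx : x ≠ 0) :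
    ∃ (k : ℕ) (w : ℤ_[p]), ‖w‖ = 1 ∧ x = (p : ℤ_[p]) ^ k * w :=
  ⟨x.valuation, PadicInt.unitCoeff hx, by simp, by
    rw [mul_comm]; exact PadicInt.unitCoeff_spec hx⟩

lemma aux_norm_one_of_unit_add {b y : ℤ_[p]} (hb : ‖b‖ = 1) {s : ℕ} (hs : 1 ≤ s) :
    ‖b + (p : ℤ_[p]) ^ s * y‖ = 1 := by
  by_cases hy : (p : ℤ_[p]) ^ s * y = 0
  · rw [hy, add_zero]; exact hb
  have hlt : ‖(p : ℤ_[p]) ^ s * y‖ < 1 := by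
    calc ‖(p : ℤ_[p]) ^ s * y‖ ≤ ‖(p : ℤ_[p]) ^ s‖ * 1 := by
          rw [norm_mul]
          exact mul_le_mul_of_nonneg_left (PadicInt.norm_le_one y) (norm_nonneg _)
      _ = (p : ℝ) ^ (-(s : ℤ)) := by rw [mul_one, PadicInt.norm_p_pow]
      _ < 1 := by
          apply zpow_lt_one_of_neg₀ (by exact_mod_cast hp.out.one_lt)
          omega
  rw [PadicInt.norm_add_eq_max_of_ne (by rw [hb]; exact (ne_of_lt hlt).symm), hb]
  exact max_eq_left (le_of_lt hlt)

lemma aux_density (θ : ℤ_[p]) (k s N : ℕ) (hs : 1 ≤ s) (b : ℤ_[p]) (hb : ‖b‖ = 1) :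
    ∃ n : ℕ, N ≤ n ∧ ∃ w : ℤ_[p], ‖w‖ = 1 ∧ ((n : ℤ_[p]) - θ) = (p : ℤ_[p]) ^ k * w ∧
      (p : ℤ_[p]) ^ s ∣ w - b := by
  set A : ℤ_[p] := θ + (p : ℤ_[p]) ^ k * b with hA
  obtain ⟨y, hy⟩ := Ideal.mem_span_singleton.mp (A.appr_spec (k + s))
  refine ⟨A.appr (k + s) + p ^ (k + s) * N, ?_, b + (p : ℤ_[p]) ^ s * ((N : ℤ_[p]) - y), ?_, ?_, ?_⟩
  · have h1 : 1 ≤ p ^ (k + s) := Nat.one_le_iff_ne_zero.mpr (pow_ne_zero _ hp.out.ne_zero)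
    calc N = 1 * N := (one_mul N).symm
      _ ≤ p ^ (k + s) * N := Nat.mul_le_mul_right N h1
      _ ≤ A.appr (k + s) + p ^ (k + s) * N := Nat.le_add_left _ _
  · exact aux_norm_one_of_unit_add hb hs
  · have happr : (A.appr (k + s) : ℤ_[p]) = A - (p : ℤ_[p]) ^ (k + s) * y := by
      rw [← hy]; ring
    push_cast
    rw [happr, hA, pow_add]
    ring
  · exact ⟨(N : ℤ_[p]) - y, by ring⟩

end Aux2

section Aux3

variable {p : ℕ} [hp : Fact p.Prime]

lemma aux_cast_pkw (k : ℕ) (w : ℤ_[p]) :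
    (((p : ℤ_[p]) ^ k * w : ℤ_[p]) : ℚ_[p]) = (p : ℚ_[p]) ^ (k : ℤ) * (w : ℚ_[p]) := by
  push_cast
  rw [zpow_natCast]

lemma aux_val_arg {c : ℚ_[p]} (hc : c ≠ 0) (m k : ℕ) {w : ℤ_[p]} (hw : ‖w‖ = 1) :
    (c * ((p : ℚ_[p]) ^ (k : ℤ) * (w : ℚ_[p])) ^ m).valuation = c.valuation + m * k := by
  have hw0 := aux_unit_coe_ne_zero hw
  have hx0 : (p : ℚ_[p]) ^ (k : ℤ) * (w : ℚ_[p]) ≠ 0 :=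
    mul_ne_zero (zpow_ne_zero _ aux_p_ne_zero) hw0
  rw [Padic.valuation_mul hc (pow_ne_zero _ hx0), aux_val_pow hx0,
    Padic.valuation_mul (zpow_ne_zero _ aux_p_ne_zero) hw0, aux_val_p_zpow,
    aux_val_unit hw]
  ring

lemma aux_padicL_mul {l m : ℕ} (hl : l ≠ 0) (hlm : l ∣ m) {c : ℚ_[p]} (hc : c ≠ 0)
    (k : ℕ) {w : ℤ_[p]} (hw : ‖w‖ = 1) :
    padicL p l (c * ((p : ℚ_[p]) ^ (k : ℤ) * (w : ℚ_[p])) ^ m) = padicL p l c * w ^ m := by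
  obtain ⟨m', hm'⟩ := hlm
  have hw0 := aux_unit_coe_ne_zero hw
  have hx0 : (p : ℚ_[p]) ^ (k : ℤ) * (w : ℚ_[p]) ≠ 0 :=
    mul_ne_zero (zpow_ne_zero _ aux_p_ne_zero) hw0
  have harg : c * ((p : ℚ_[p]) ^ (k : ℤ) * (w : ℚ_[p])) ^ m ≠ 0 :=
    mul_ne_zero hc (pow_ne_zero _ hx0)
  apply Subtype.coe_injective
  show (padicL p l (c * ((p : ℚ_[p]) ^ (k : ℤ) * (w : ℚ_[p])) ^ m) : ℚ_[p])
      = ((padicL p l c * w ^ m : ℤ_[p]) : ℚ_[p])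
  have hrhs : ((padicL p l c * w ^ m : ℤ_[p]) : ℚ_[p])
      = (padicL p l c : ℚ_[p]) * (w : ℚ_[p]) ^ m := by push_cast; ring
  rw [hrhs, padicL_coe hl harg, padicL_coe hl hc, aux_val_arg hc m k hw]
  have hl' : (l : ℤ) ≠ 0 := by exact_mod_cast hl
  have hdiv : (c.valuation + (m : ℤ) * k) / (l : ℤ)
      = c.valuation / (l : ℤ) + (m' : ℤ) * k := by
    have h2 : c.valuation + (m : ℤ) * k = c.valuation + ((m' : ℤ) * k) * l := by
      rw [hm']; push_cast; ring
    rw [h2, Int.add_mul_ediv_right _ _ hl']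
  rw [hdiv, mul_pow, ← zpow_natCast ((p : ℚ_[p]) ^ (k : ℤ)) m, ← zpow_mul]
  rw [show (-((l : ℤ) * (c.valuation / (l : ℤ) + (m' : ℤ) * k)))
      = (-((l : ℤ) * (c.valuation / (l : ℤ)))) + (-((k : ℤ) * m)) by rw [hm']; push_cast; ring]
  rw [zpow_add₀ aux_p_ne_zero]
  have hppow : (p : ℚ_[p]) ^ ((k : ℤ) * m) * (p : ℚ_[p]) ^ (-((k : ℤ) * m)) = 1 := by
    rw [← zpow_add₀ aux_p_ne_zero]; simp
  calc (p:ℚ_[p]) ^ (-((l:ℤ) * (c.valuation / (l:ℤ)))) * (p:ℚ_[p]) ^ (-((k:ℤ) * m))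
        * (c * ((p:ℚ_[p]) ^ ((k:ℤ) * m) * (w : ℚ_[p]) ^ m))
      = (p:ℚ_[p]) ^ (-((l:ℤ) * (c.valuation / (l:ℤ)))) * c * (w : ℚ_[p]) ^ m
        * ((p:ℚ_[p]) ^ ((k:ℤ) * m) * (p:ℚ_[p]) ^ (-((k:ℤ) * m))) := by ring
    _ = (p:ℚ_[p]) ^ (-((l:ℤ) * (c.valuation / (l:ℤ)))) * c * (w : ℚ_[p]) ^ m := by
        rw [hppow, mul_one]
    _ = _ := by ring

end Aux3

section Aux4

variable {p : ℕ} [hp : Fact p.Prime]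

lemma aux_int_norm_one {a : ℤ} (ha : Int.gcd a p = 1) : ‖(a : ℤ_[p])‖ = 1 := by
  refine le_antisymm (PadicInt.norm_le_one _) ?_
  by_contra hlt
  push_neg at hlt
  have hdvd : (p : ℤ) ∣ a := (PadicInt.norm_int_lt_one_iff_dvd a).mp hlt
  have h2 : (p : ℤ) ∣ (Int.gcd a p : ℤ) := Int.dvd_coe_gcd hdvd (dvd_refl _)
  rw [ha] at h2
  have h3 : p ∣ 1 := by exact_mod_cast h2
  have := Nat.le_of_dvd one_pos h3
  have := hp.out.one_lt
  omega

lemma aux_pow_dvd_of_toZModPow_eq {s s' : ℕ} (hss : s ≤ s') {a b : ℤ_[p]}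
    (h : (p : ℤ_[p]) ^ s' ∣ a - b) :
    PadicInt.toZModPow s a = PadicInt.toZModPow s b :=
  (aux_toZModPow_eq_iff s a b).mpr (dvd_trans (pow_dvd_pow _ hss) h)

lemma aux_exists_int_rep {s : ℕ} (hs : 1 ≤ s) (w : ℤ_[p]) (hw : ‖w‖ = 1) :
    ∃ a : ℤ, Int.gcd a p = 1 ∧
      PadicInt.toZModPow s ((a : ℤ_[p])) = PadicInt.toZModPow s w := by
  haveI : NeZero (p ^ s) := ⟨pow_ne_zero s hp.out.ne_zero⟩
  set v : ℕ := (PadicInt.toZModPow s w).val with hv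
  have heq : PadicInt.toZModPow s ((v : ℤ_[p])) = PadicInt.toZModPow s w := by
    rw [map_natCast, hv, ZMod.natCast_zmod_val]
  have hnd : ¬ (p ∣ v) := by
    intro hpv
    have h5 : (p : ℤ_[p]) ∣ (v : ℤ_[p]) - w :=
      dvd_trans (dvd_pow_self _ (by omega : s ≠ 0)) ((aux_toZModPow_eq_iff s _ _).mp heq)
    have h6 : (p : ℤ_[p]) ∣ (v : ℤ_[p]) := Nat.cast_dvd_cast hpv
    have h7 : (p : ℤ_[p]) ∣ w := by
      have := dvd_sub h6 h5
      simpa using this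
    have := (PadicInt.norm_lt_one_iff_dvd w).mpr h7
    rw [hw] at this
    exact lt_irrefl _ this
  refine ⟨(v : ℤ), ?_, ?_⟩
  · have hcop : Nat.Coprime p v := (Nat.Prime.coprime_iff_not_dvd hp.out).mpr hnd
    have : Int.gcd (v : ℤ) (p : ℤ) = Nat.gcd v p := by
      simp [Int.gcd]
    rw [this]
    exact Nat.Coprime.symm hcop
  · rw [show ((v : ℤ) : ℤ_[p]) = ((v : ℕ) : ℤ_[p]) by push_cast; ring]
    exact heq

lemma aux_modeq_iff {s : ℕ} (a : ℤ) (m : ℕ) :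
    a ^ m ≡ 1 [ZMOD ((p : ℤ) ^ s)] ↔
      PadicInt.toZModPow s (((a : ℤ_[p])) ^ m) = 1 := by
  have hmod : ((p ^ s : ℕ) : ℤ) = (p : ℤ) ^ s := by push_cast; ring
  have hcast : ((a : ℤ_[p]) ^ m) = ((a ^ m : ℤ) : ℤ_[p]) := by push_cast; ring
  rw [hcast, map_intCast, show (1 : ZMod (p ^ s)) = ((1 : ℤ) : ZMod (p ^ s)) by simp,
    ZMod.intCast_eq_intCast_iff, hmod]

lemma aux_cond_iff_units {s m : ℕ} (hs : 1 ≤ s) :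
    (∀ a : ℤ, Int.gcd a p = 1 → a ^ m ≡ 1 [ZMOD ((p : ℤ) ^ s)]) ↔
      (∀ w : ℤ_[p], ‖w‖ = 1 → PadicInt.toZModPow s (w ^ m) = 1) := by
  constructor
  · intro h w hw
    obtain ⟨a, ha, haw⟩ := aux_exists_int_rep hs w hw
    have h1 := (aux_modeq_iff a m).mp (h a ha)
    rw [map_pow, haw, ← map_pow] at h1
    exact h1
  · intro h a ha
    rw [aux_modeq_iff]
    exact h _ (aux_int_norm_one ha)

end Aux4

/-- Equivalence of condition (C) with eventual periodicity, and with
constancy, of the sequence `(ℓ_{p^l,d}(c(n-θ)^m))_n`. -/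
theorem statement16 (p : ℕ) [Fact p.Prime] (l d m : ℕ) (hl : 1 ≤ l) (hd : 1 ≤ d)
    (hm : 1 ≤ m) (c : ℚ_[p]) (hc : c ≠ 0) (θ : ℤ_[p])
    (hθ : ∀ n : ℕ, θ ≠ (n : ℤ_[p])) :
    ((l ∣ m ∧ ∀ a : ℤ, Int.gcd a p = 1 →
        a ^ m ≡ 1 [ZMOD ((p : ℤ) ^ (l * d - (c.valuation % (l : ℤ)).toNat))]) ↔
      EventuallyPeriodic
        (fun n : ℕ => padicEll p l d (c * ((n : ℚ_[p]) - (θ : ℚ_[p])) ^ m))) ∧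
    (EventuallyPeriodic
        (fun n : ℕ => padicEll p l d (c * ((n : ℚ_[p]) - (θ : ℚ_[p])) ^ m)) ↔
      ∀ n : ℕ, padicEll p l d (c * ((n : ℚ_[p]) - (θ : ℚ_[p])) ^ m) = padicEll p l d c) := by
  have h1p : 1 < (p : ℝ) := by exact_mod_cast (Fact.out : p.Prime).one_lt
  set r : ℕ := (c.valuation % (l : ℤ)).toNat with hrdef
  have hl0 : l ≠ 0 := by omega
  have hlZ : (0 : ℤ) < (l : ℤ) := by exact_mod_cast hl
  have hr_mod : (r : ℤ) = c.valuation % (l : ℤ) :=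
    Int.toNat_of_nonneg (Int.emod_nonneg _ (by omega))
  have hrl : r < l := by
    have h1 := Int.emod_lt_of_pos c.valuation hlZ
    omega
  have hld1 : 1 ≤ l * d := Nat.one_le_iff_ne_zero.mpr (Nat.mul_ne_zero (by omega) (by omega))
  have hlld : l ≤ l * d := Nat.le_mul_of_pos_right l (by omega)
  have hrld : r ≤ l * d := by omega
  have hrld' : r < l * d := by omega
  have hs1 : 1 ≤ l * d - r := by omega
  have hsld : l * d - r ≤ l * d := by omega
  set Lc : ℤ_[p] := padicL p l c with hLcdef
  have hLc0 : Lc ≠ 0 := padicL_ne_zero hl0 hc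
  have hLcval : Lc.valuation = (r : ℤ) := by rw [hLcdef, padicL_val hl0 hc, hr_mod]
  have hLcdecomp : Lc = (p : ℤ_[p]) ^ r * (PadicInt.unitCoeff hLc0 : ℤ_[p]) := by
    rw [mul_comm]
    have h2 := PadicInt.unitCoeff_spec hLc0
    rwa [show Lc.valuation = r by exact_mod_cast hLcval] at h2
  have hEllc : padicEll p l d c = PadicInt.toZModPow (l * d) Lc := rfl
  have hx0 : ∀ n : ℕ, ((n : ℤ_[p]) - θ) ≠ 0 := by
    intro n h
    exact hθ n (sub_eq_zero.mp h).symm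
  have hxcast : ∀ n : ℕ, ((n : ℚ_[p]) - (θ : ℚ_[p])) = (((n : ℤ_[p]) - θ : ℤ_[p]) : ℚ_[p]) := by
    intro n; push_cast; ring
  -- the key formula
  have hform : l ∣ m → ∀ (k : ℕ) (w : ℤ_[p]), ‖w‖ = 1 →
      padicEll p l d (c * ((p : ℚ_[p]) ^ (k : ℤ) * (w : ℚ_[p])) ^ m)
        = PadicInt.toZModPow (l * d) (Lc * w ^ m) := by
    intro hlm k w hw
    show PadicInt.toZModPow (l * d) (padicL p l _) = _
    rw [aux_padicL_mul hl0 hlm hc k hw]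
  -- (1) → (3)
  have h13 : (l ∣ m ∧ ∀ a : ℤ, Int.gcd a p = 1 →
        a ^ m ≡ 1 [ZMOD ((p : ℤ) ^ (l * d - r))]) →
      ∀ n : ℕ, padicEll p l d (c * ((n : ℚ_[p]) - (θ : ℚ_[p])) ^ m) = padicEll p l d c := by
    rintro ⟨hlm, hCond⟩ n
    obtain ⟨k, w, hw, hxeq⟩ := aux_exists_decomp _ (hx0 n)
    rw [hxcast n, hxeq, aux_cast_pkw, hform hlm k w hw, hEllc]
    have hcanc := aux_cancel hrld Lc _ (Units.isUnit _) hLcdecomp (w ^ m) 1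
    rw [mul_one] at hcanc
    rw [hcanc, map_one]
    exact (aux_cond_iff_units hs1).mp hCond w hw
  -- (3) → (2)
  have h32 : (∀ n : ℕ, padicEll p l d (c * ((n : ℚ_[p]) - (θ : ℚ_[p])) ^ m) = padicEll p l d c) →
      EventuallyPeriodic (fun n : ℕ => padicEll p l d (c * ((n : ℚ_[p]) - (θ : ℚ_[p])) ^ m)) := by
    intro h
    exact ⟨1, le_refl 1, 0, fun n _ => (h (n + 1)).trans (h n).symm⟩
  -- (2) → (1)
  have h21 : EventuallyPeriodic (fun n : ℕ => padicEll p l d (c * ((n : ℚ_[p]) - (θ : ℚ_[p])) ^ m)) →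
      (l ∣ m ∧ ∀ a : ℤ, Int.gcd a p = 1 →
        a ^ m ≡ 1 [ZMOD ((p : ℤ) ^ (l * d - r))]) := by
    rintro ⟨T, hT1, N, hper⟩
    have hT0 : (T : ℤ_[p]) ≠ 0 := Nat.cast_ne_zero.mpr (by omega)
    obtain ⟨t, uT, huT, hTeq⟩ := aux_exists_decomp _ hT0
    -- Step A : l ∣ m
    have hlm : l ∣ m := by
      obtain ⟨n, hnN, w, hw, hxeq, -⟩ := aux_density θ (t + 1) 1 N (le_refl 1) 1 norm_one
      have hwT : ‖uT + (p : ℤ_[p]) ^ 1 * w‖ = 1 := aux_norm_one_of_unit_add huT (le_refl 1)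
      have hx'eq : ((n + T : ℕ) : ℤ_[p]) - θ = (p : ℤ_[p]) ^ t * (uT + (p : ℤ_[p]) ^ 1 * w) := by
        push_cast
        rw [show ((n : ℤ_[p]) + (T : ℤ_[p]) - θ) = ((n : ℤ_[p]) - θ) + (T : ℤ_[p]) by ring,
          hxeq, hTeq]
        ring
      have hpp : padicEll p l d (c * (((n + T : ℕ) : ℚ_[p]) - (θ : ℚ_[p])) ^ m)
          = padicEll p l d (c * ((n : ℚ_[p]) - (θ : ℚ_[p])) ^ m) := hper n hnN
      rw [hxcast (n + T), hxcast n, hx'eq, hxeq, aux_cast_pkw, aux_cast_pkw] at hpp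
      have hy2 : c * ((p : ℚ_[p]) ^ (t : ℤ) * ((uT + (p:ℤ_[p])^1 * w : ℤ_[p]) : ℚ_[p])) ^ m ≠ 0 :=
        mul_ne_zero hc (pow_ne_zero _
          (mul_ne_zero (zpow_ne_zero _ aux_p_ne_zero) (aux_unit_coe_ne_zero hwT)))
      have hy1 : c * ((p : ℚ_[p]) ^ ((t + 1 : ℕ) : ℤ) * (w : ℚ_[p])) ^ m ≠ 0 :=
        mul_ne_zero hc (pow_ne_zero _
          (mul_ne_zero (zpow_ne_zero _ aux_p_ne_zero) (aux_unit_coe_ne_zero hw)))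
      have hpp2 : PadicInt.toZModPow (l * d) (padicL p l
            (c * ((p : ℚ_[p]) ^ (t : ℤ) * ((uT + (p:ℤ_[p])^1 * w : ℤ_[p]) : ℚ_[p])) ^ m))
          = PadicInt.toZModPow (l * d) (padicL p l
            (c * ((p : ℚ_[p]) ^ ((t + 1 : ℕ) : ℤ) * (w : ℚ_[p])) ^ m)) := hpp
      have hnorm2 : ‖padicL p l
            (c * ((p : ℚ_[p]) ^ (t : ℤ) * ((uT + (p:ℤ_[p])^1 * w : ℤ_[p]) : ℚ_[p])) ^ m)‖
          = (p : ℝ) ^ (-((c.valuation + (m : ℤ) * t) % (l : ℤ))) := by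
        rw [PadicInt.norm_eq_zpow_neg_valuation (padicL_ne_zero hl0 hy2), padicL_val hl0 hy2,
          aux_val_arg hc m t hwT]
      have hnorm1 : ‖padicL p l (c * ((p : ℚ_[p]) ^ ((t + 1 : ℕ) : ℤ) * (w : ℚ_[p])) ^ m)‖
          = (p : ℝ) ^ (-((c.valuation + (m : ℤ) * (t + 1)) % (l : ℤ))) := by
        rw [PadicInt.norm_eq_zpow_neg_valuation (padicL_ne_zero hl0 hy1), padicL_val hl0 hy1,
          aux_val_arg hc m (t + 1) hw]
        push_cast
        ring_nf
      have hmodlt : (c.valuation + (m : ℤ) * t) % (l : ℤ) < (l * d : ℕ) := by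
        have := Int.emod_lt_of_pos (c.valuation + (m : ℤ) * t) hlZ
        have h9 : ((l : ℕ) : ℤ) ≤ ((l * d : ℕ) : ℤ) := by exact_mod_cast hlld
        omega
      have hbound : (p : ℝ) ^ (-((l * d : ℕ) : ℤ)) < ‖padicL p l
            (c * ((p : ℚ_[p]) ^ (t : ℤ) * ((uT + (p:ℤ_[p])^1 * w : ℤ_[p]) : ℚ_[p])) ^ m)‖ := by
        rw [hnorm2]
        exact zpow_lt_zpow_right₀ h1p (by omega)
      have heqnorm := aux_norm_eq_of_toZModPow_eq hpp2 hbound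
      rw [hnorm1, hnorm2] at heqnorm
      have hexp := (zpow_right_strictMono₀ h1p).injective heqnorm
      have hmod : (c.valuation + (m : ℤ) * t) % (l : ℤ)
          = (c.valuation + (m : ℤ) * (t + 1)) % (l : ℤ) := by omega
      have hdvd : (l : ℤ) ∣ (m : ℤ) := by
        have h8 : (l : ℤ) ∣ (c.valuation + (m : ℤ) * (t + 1)) - (c.valuation + (m : ℤ) * t) :=
          Int.ModEq.dvd hmod
        have h9 : (c.valuation + (m : ℤ) * (t + 1)) - (c.valuation + (m : ℤ) * t) = (m : ℤ) := by
          ring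
        rwa [h9] at h8
      exact_mod_cast hdvd
    -- Step B : the congruence condition
    refine ⟨hlm, (aux_cond_iff_units hs1).mpr ?_⟩
    have hcong : ∀ w b : ℤ_[p], (p : ℤ_[p]) ^ (l * d) ∣ w - b →
        PadicInt.toZModPow (l * d - r) (w ^ m) = PadicInt.toZModPow (l * d - r) (b ^ m) := by
      intro w b hdvd
      rw [map_pow, map_pow, aux_pow_dvd_of_toZModPow_eq hsld hdvd]
    have hkey : ∀ b : ℤ_[p], ‖b‖ = 1 →
        PadicInt.toZModPow (l * d - r) (b ^ m) = PadicInt.toZModPow (l * d - r) (uT ^ m) := by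
      intro b hb
      obtain ⟨n, hnN, w, hw, hxeq, hwb⟩ := aux_density θ (t + l * d) (l * d) N hld1 b hb
      have hwT : ‖uT + (p : ℤ_[p]) ^ (l * d) * w‖ = 1 := aux_norm_one_of_unit_add huT hld1
      have hx'eq : ((n + T : ℕ) : ℤ_[p]) - θ
          = (p : ℤ_[p]) ^ t * (uT + (p : ℤ_[p]) ^ (l * d) * w) := by
        push_cast
        rw [show ((n : ℤ_[p]) + (T : ℤ_[p]) - θ) = ((n : ℤ_[p]) - θ) + (T : ℤ_[p]) by ring,
          hxeq, hTeq, pow_add]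
        ring
      have hpp : padicEll p l d (c * (((n + T : ℕ) : ℚ_[p]) - (θ : ℚ_[p])) ^ m)
          = padicEll p l d (c * ((n : ℚ_[p]) - (θ : ℚ_[p])) ^ m) := hper n hnN
      rw [hxcast (n + T), hxcast n, hx'eq, hxeq, aux_cast_pkw, aux_cast_pkw,
        hform hlm t _ hwT, hform hlm (t + l * d) w hw] at hpp
      have hc1 := (aux_cancel hrld Lc _ (Units.isUnit _) hLcdecomp
        ((uT + (p : ℤ_[p]) ^ (l * d) * w) ^ m) (w ^ m)).mp hpp
      have h5 : PadicInt.toZModPow (l * d - r) ((uT + (p : ℤ_[p]) ^ (l * d) * w) ^ m)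
          = PadicInt.toZModPow (l * d - r) (uT ^ m) :=
        hcong _ _ ⟨w, by ring⟩
      have h6 : PadicInt.toZModPow (l * d - r) (w ^ m)
          = PadicInt.toZModPow (l * d - r) (b ^ m) := hcong _ _ hwb
      rw [← h6, ← hc1, h5]
    intro w₀ hw₀
    have h7 := hkey w₀ hw₀
    have h8 := hkey 1 norm_one
    rw [one_pow, map_one] at h8
    rw [h7, ← h8]
  exact ⟨⟨fun h => h32 (h13 h), h21⟩, ⟨fun h => h13 (h21 h), h32⟩⟩
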